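/- Let T > 0 and let u : ℝ × [0,T) → ℝ be a classical periodic solution of the Fornberg–Whitham equation with initial value u₀(x) = u(x,0). Then for every t ∈ [0,T), ∫_0^1 u(x,t)² dx ≤ e^{2t} ∫_0^1 u₀(x)² dx. -/

import Mathlib

open MeasureTheory

/-- The 1-periodic convolution kernel of `(id - ∂ₓ²)⁻¹` on the circle, on `[0,1)`. -/
noncomputable def FWKernel (y : ℝ) : ℝ :=
  (Real.exp y + Real.exp (1 - y)) / (2 * (Real.exp 1 - 1))

/-- A classical periodic solution of the Fornberg–Whitham equation on `ℝ × [0,T)`: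
`u` is 1-periodic in `x`, has continuous partial derivatives `ux = ∂ₓ u` and
`ut = ∂ₜ u` on `ℝ × [0,T)`, and satisfies
`∂ₜ u + (3/2) u ∂ₓ u = ∫_0^1 K(y) ∂ₓ u(x - y, t) dy`. -/
def IsClassicalFWSolution (T : ℝ) (u ux ut : ℝ → ℝ → ℝ) : Prop :=
  ContinuousOn (fun p : ℝ × ℝ => u p.1 p.2) (Set.univ ×ˢ Set.Ico 0 T) ∧
  (∀ x : ℝ, ∀ t ∈ Set.Ico (0 : ℝ) T, u (x + 1) t = u x t) ∧
  (∀ x : ℝ, ∀ t ∈ Set.Ico (0 : ℝ) T, HasDerivAt (fun x' => u x' t) (ux x t) x) ∧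
  (∀ x : ℝ, ∀ t ∈ Set.Ico (0 : ℝ) T,
    HasDerivWithinAt (fun t' => u x t') (ut x t) (Set.Ico 0 T) t) ∧
  ContinuousOn (fun p : ℝ × ℝ => ux p.1 p.2) (Set.univ ×ˢ Set.Ico 0 T) ∧
  ContinuousOn (fun p : ℝ × ℝ => ut p.1 p.2) (Set.univ ×ˢ Set.Ico 0 T) ∧
  (∀ x : ℝ, ∀ t ∈ Set.Ico (0 : ℝ) T,
    ut x t + (3 / 2) * u x t * ux x t = ∫ y in (0:ℝ)..1, FWKernel y * ux (x - y) t)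

/-- Fubini for a continuous function on a closed box, interval-integral form. -/
lemma fw_fubini_box {a b c d : ℝ} (hab : a ≤ b) (hcd : c ≤ d) {F : ℝ → ℝ → ℝ}
    (hF : ContinuousOn (fun p : ℝ × ℝ => F p.1 p.2) (Set.Icc a b ×ˢ Set.Icc c d)) :
    (∫ x in a..b, ∫ y in c..d, F x y) = ∫ y in c..d, ∫ x in a..b, F x y := by
  have hint : Integrable (Function.uncurry F)
      ((volume.restrict (Set.Ioc a b)).prod (volume.restrict (Set.Ioc c d))) := by
    rw [Measure.prod_restrict]
    have hcomp : IsCompact (Set.Icc a b ×ˢ Set.Icc c d) := isCompact_Icc.prod isCompact_Icc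
    have h1 : IntegrableOn (fun p : ℝ × ℝ => F p.1 p.2)
        (Set.Icc a b ×ˢ Set.Icc c d) volume := hF.integrableOn_compact hcomp
    have h2 : IntegrableOn (fun p : ℝ × ℝ => F p.1 p.2)
        (Set.Ioc a b ×ˢ Set.Ioc c d) volume :=
      h1.mono_set (Set.prod_mono Set.Ioc_subset_Icc_self Set.Ioc_subset_Icc_self)
    rw [Measure.volume_eq_prod] at h2
    exact h2
  rw [intervalIntegral.integral_of_le hab, intervalIntegral.integral_of_le hcd]
  simp_rw [intervalIntegral.integral_of_le hcd, intervalIntegral.integral_of_le hab]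
  exact integral_integral_swap hint

/-- Slice continuity in the first variable. -/
lemma fw_cont_x {T : ℝ} {F : ℝ → ℝ → ℝ}
    (hF : ContinuousOn (fun p : ℝ × ℝ => F p.1 p.2) (Set.univ ×ˢ Set.Ico 0 T))
    {t : ℝ} (ht : t ∈ Set.Ico (0 : ℝ) T) : Continuous fun x => F x t :=
  hF.comp_continuous (by fun_prop) fun x => Set.mk_mem_prod (Set.mem_univ x) ht

/-- Slice continuity in the second variable. -/
lemma fw_cont_t {T : ℝ} {F : ℝ → ℝ → ℝ}
    (hF : ContinuousOn (fun p : ℝ × ℝ => F p.1 p.2) (Set.univ ×ˢ Set.Ico 0 T))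
    (x : ℝ) : ContinuousOn (fun t => F x t) (Set.Ico 0 T) :=
  hF.comp (by fun_prop) fun t ht => Set.mk_mem_prod (Set.mem_univ x) ht

/-- The kernel is symmetric under `y ↦ 1 - y`. -/
lemma fw_kernel_symm (y : ℝ) : FWKernel (1 - y) = FWKernel y := by
  unfold FWKernel
  ring_nf

lemma fw_kernel_continuous : Continuous FWKernel := by
  unfold FWKernel
  fun_prop

/-- The core cancellation: for a `C¹` 1-periodic `f`,
`∫₀¹ ∫₀¹ f x * (K y * f' (x - y)) dy dx = 0`. -/
lemma fw_bilinear_zero (f f' : ℝ → ℝ) (hper : ∀ x, f (x + 1) = f x)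
    (hderiv : ∀ x, HasDerivAt f (f' x) x) (hf' : Continuous f') :
    (∫ x in (0:ℝ)..1, ∫ y in (0:ℝ)..1, f x * (FWKernel y * f' (x - y))) = 0 := by
  have hf : Continuous f := by
    rw [continuous_iff_continuousAt]
    exact fun x => (hderiv x).continuousAt
  have hf'per : ∀ x, f' (x + 1) = f' x := by
    intro x
    have h1 : HasDerivAt (fun z : ℝ => f (z + 1)) (f' (x + 1)) x := by
      have := (hderiv (x + 1)).comp x ((hasDerivAt_id x).add_const 1)
      simpa [Function.comp_def] using this
    have h2 : (fun z : ℝ => f (z + 1)) = f := funext hper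
    rw [h2] at h1
    exact h1.unique (hderiv x)
  set I : ℝ → ℝ := fun y => ∫ x in (0:ℝ)..1, f x * f' (x - y) with hI_def
  -- I is odd
  have hIodd : ∀ y, I y = - I (-y) := by
    intro y
    have hc1 : Continuous fun x => f' x * f (x - y) :=
      hf'.mul (hf.comp (continuous_id.sub continuous_const))
    have hc2 : Continuous fun x => f x * f' (x - y) :=
      hf.mul (hf'.comp (continuous_id.sub continuous_const))
    -- integration by parts via FTC
    have hd2 : ∀ x : ℝ, HasDerivAt (fun z => f z * f (z - y))
        (f' x * f (x - y) + f x * f' (x - y)) x := by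
      intro x
      have h1 : HasDerivAt (fun z : ℝ => f (z - y)) (f' (x - y)) x := by
        have := (hderiv (x - y)).comp x ((hasDerivAt_id x).sub_const y)
        simpa [Function.comp_def] using this
      exact (hderiv x).mul h1
    have hftc : (∫ x in (0:ℝ)..1, (f' x * f (x - y) + f x * f' (x - y)))
        = f 1 * f (1 - y) - f 0 * f (0 - y) :=
      intervalIntegral.integral_eq_sub_of_hasDerivAt (fun x _ => hd2 x)
        ((hc1.add hc2).intervalIntegrable 0 1)
    have hz : f 1 * f (1 - y) - f 0 * f (0 - y) = 0 := by
      have e1 : f 1 = f 0 := by simpa using hper 0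
      have e2 : f (1 - y) = f (0 - y) := by
        have := hper (-y)
        rw [show (1 : ℝ) - y = -y + 1 by ring, this, show (0 : ℝ) - y = -y by ring]
      rw [e1, e2]
      ring
    rw [intervalIntegral.integral_add (hc1.intervalIntegrable 0 1)
      (hc2.intervalIntegrable 0 1), hz] at hftc
    -- change of variables in the first integral
    have hJ : (∫ x in (0:ℝ)..1, f' x * f (x - y)) = I (-y) := by
      have h1 := intervalIntegral.integral_comp_add_right
        (a := (0:ℝ) - y) (b := 1 - y) (f := fun x => f' x * f (x - y)) y
      have h1' : (∫ z in (0:ℝ) - y..1 - y, f' (z + y) * f (z + y - y))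
          = ∫ x in (0:ℝ)..1, f' x * f (x - y) := by
        rw [h1, show (0:ℝ) - y + y = 0 by ring, show (1:ℝ) - y + y = 1 by ring]
      have h2 : (∫ z in (0:ℝ) - y..1 - y, f' (z + y) * f (z + y - y))
          = ∫ z in (0:ℝ) - y..1 - y, f' (z + y) * f z := by
        apply intervalIntegral.integral_congr
        intro z _
        show f' (z + y) * f (z + y - y) = f' (z + y) * f z
        rw [add_sub_cancel_right]
      have hgper : Function.Periodic (fun z => f' (z + y) * f z) 1 := by
        intro z
        simp only
        rw [hper z, show z + 1 + y = (z + y) + 1 by ring, hf'per (z + y)]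
      have h3 := hgper.intervalIntegral_add_eq ((0:ℝ) - y) 0
      have h4 : (∫ z in (0:ℝ) - y..1 - y, f' (z + y) * f z)
          = ∫ z in (0:ℝ)..1, f' (z + y) * f z := by
        rw [show (1:ℝ) - y = (0 - y) + 1 by ring]
        simpa using h3
      have h5 : (∫ z in (0:ℝ)..1, f' (z + y) * f z) = I (-y) := by
        apply intervalIntegral.integral_congr
        intro z _
        show f' (z + y) * f z = f z * f' (z - -y)
        rw [show z - -y = z + y by ring]
        ring
      rw [← h1', h2, h4, h5]
    rw [hJ] at hftc
    have hIy : I y = ∫ x in (0:ℝ)..1, f x * f' (x - y) := rfl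
    rw [hIy]
    linarith
  -- I is 1-periodic
  have hIper : ∀ y, I (y + 1) = I y := by
    intro y
    apply intervalIntegral.integral_congr
    intro x _
    have h1 : f' (x - (y + 1)) = f' (x - y) := by
      have := hf'per (x - y - 1)
      rw [show x - y - 1 + 1 = x - y by ring] at this
      rw [show x - (y + 1) = x - y - 1 by ring, this]
    show f x * f' (x - (y + 1)) = f x * f' (x - y)
    rw [h1]
  -- swap the double integral and reduce to ∫ K y * I y dy
  have hFcont : Continuous fun p : ℝ × ℝ => f p.1 * (FWKernel p.2 * f' (p.1 - p.2)) :=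
    (hf.comp continuous_fst).mul ((fw_kernel_continuous.comp continuous_snd).mul
      (hf'.comp (continuous_fst.sub continuous_snd)))
  have hswap := fw_fubini_box (zero_le_one) (zero_le_one)
    (F := fun x y => f x * (FWKernel y * f' (x - y))) hFcont.continuousOn
  rw [hswap]
  have hinner : ∀ y, (∫ x in (0:ℝ)..1, f x * (FWKernel y * f' (x - y)))
      = FWKernel y * I y := by
    intro y
    rw [← intervalIntegral.integral_const_mul]
    apply intervalIntegral.integral_congr
    intro x _
    ring
  rw [intervalIntegral.integral_congr (g := fun y => FWKernel y * I y)
    (fun y _ => hinner y)]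
  -- reflection y ↦ 1 - y
  have hrefl : (∫ y in (0:ℝ)..1, FWKernel y * I y)
      = ∫ y in (0:ℝ)..1, FWKernel (1 - y) * I (1 - y) := by
    have h := intervalIntegral.integral_comp_sub_left
      (a := (0:ℝ)) (b := 1) (fun y => FWKernel y * I y) 1
    rw [show (1:ℝ) - 1 = 0 by ring, show (1:ℝ) - 0 = 1 by ring] at h
    exact h.symm
  have hneg : ∀ y, FWKernel (1 - y) * I (1 - y) = -(FWKernel y * I y) := by
    intro y
    rw [fw_kernel_symm]
    have h1 : I (1 - y) = I (-y) := by
      rw [show (1:ℝ) - y = -y + 1 by ring, hIper (-y)]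
    rw [h1, show I (-y) = - I y by rw [hIodd y]; ring]
    ring
  have h2 : (∫ y in (0:ℝ)..1, FWKernel (1 - y) * I (1 - y))
      = - ∫ y in (0:ℝ)..1, FWKernel y * I y := by
    rw [intervalIntegral.integral_congr (g := fun y => -(FWKernel y * I y))
      (fun y _ => hneg y), intervalIntegral.integral_neg]
  rw [h2] at hrefl
  linarith

/-- L² bound for classical periodic Fornberg–Whitham solutions:
`∫_0^1 u(x,t)² dx ≤ e^{2t} ∫_0^1 u(x,0)² dx` for `t ∈ [0,T)`. -/
theorem fw_L2_bound (T : ℝ) (hT : 0 < T) (u ux ut : ℝ → ℝ → ℝ)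
    (hu : IsClassicalFWSolution T u ux ut) :
    ∀ t ∈ Set.Ico (0 : ℝ) T,
      (∫ x in (0:ℝ)..1, (u x t) ^ 2) ≤ Real.exp (2 * t) * ∫ x in (0:ℝ)..1, (u x 0) ^ 2 := by
  obtain ⟨hcont, hper, hdx, hdt, hcux, hcut, hpde⟩ := hu
  -- the L² energy is conserved; first, the key vanishing identity
  have key : ∀ s ∈ Set.Ico (0:ℝ) T, (∫ x in (0:ℝ)..1, u x s * ut x s) = 0 := by
    intro s hs
    have hfper : ∀ x, u (x + 1) s = u x s := fun x => hper x s hs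
    have hfd : ∀ x, HasDerivAt (fun x' => u x' s) (ux x s) x := fun x => hdx x s hs
    have hf'c : Continuous fun x => ux x s := fw_cont_x hcux hs
    have hfc : Continuous fun x => u x s := fw_cont_x hcont hs
    have hutc : Continuous fun x => ut x s := fw_cont_x hcut hs
    have hB := fw_bilinear_zero (fun x => u x s) (fun x => ux x s) hfper hfd hf'c
    -- ∫ u² uₓ = 0 by periodicity
    have hcube : (∫ x in (0:ℝ)..1, (u x s) ^ 2 * ux x s) = 0 := by
      have hd : ∀ x : ℝ, HasDerivAt (fun z => (u z s) ^ 3 / 3) ((u x s) ^ 2 * ux x s) x := by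
        intro x
        have := ((hfd x).fun_pow 3).div_const 3
        exact this.congr_deriv (by push_cast; ring)
      rw [intervalIntegral.integral_eq_sub_of_hasDerivAt (fun x _ => hd x)
        (((hfc.pow 2).mul hf'c).intervalIntegrable 0 1)]
      have h1 : u 1 s = u 0 s := by simpa using hfper 0
      rw [h1]
      ring
    -- pointwise identity from the PDE
    have hpt : ∀ x : ℝ, (∫ y in (0:ℝ)..1, u x s * (FWKernel y * ux (x - y) s))
        = u x s * ut x s + (3/2) * (u x s) ^ 2 * ux x s := by
      intro x
      rw [intervalIntegral.integral_const_mul, ← hpde x s hs]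
      ring
    have hiter : (∫ x in (0:ℝ)..1,
        (u x s * ut x s + (3/2) * (u x s) ^ 2 * ux x s)) = 0 := by
      calc (∫ x in (0:ℝ)..1, (u x s * ut x s + (3/2) * (u x s) ^ 2 * ux x s))
          = ∫ x in (0:ℝ)..1, ∫ y in (0:ℝ)..1, u x s * (FWKernel y * ux (x - y) s) :=
            intervalIntegral.integral_congr fun x _ => (hpt x).symm
        _ = 0 := hB
    have h1 : IntervalIntegrable (fun x => u x s * ut x s) volume 0 1 :=
      (hfc.mul hutc).intervalIntegrable 0 1
    have h2 : IntervalIntegrable (fun x => (3/2) * (u x s) ^ 2 * ux x s) volume 0 1 :=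
      ((continuous_const.mul (hfc.pow 2)).mul hf'c).intervalIntegrable 0 1
    rw [intervalIntegral.integral_add h1 h2] at hiter
    have h3 : (∫ x in (0:ℝ)..1, (3/2) * (u x s) ^ 2 * ux x s)
        = (3/2) * ∫ x in (0:ℝ)..1, (u x s) ^ 2 * ux x s := by
      rw [← intervalIntegral.integral_const_mul]
      apply intervalIntegral.integral_congr
      intro x _
      ring
    rw [h3, hcube] at hiter
    linarith
  intro t ht
  have ht0 : (0:ℝ) ≤ t := ht.1
  have h0T : (0:ℝ) ∈ Set.Ico (0:ℝ) T := ⟨le_refl 0, hT⟩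
  have hIccsub : Set.Icc (0:ℝ) t ⊆ Set.Ico 0 T :=
    fun s hsm => ⟨hsm.1, lt_of_le_of_lt hsm.2 ht.2⟩
  -- FTC in time for each x
  have hftc : ∀ x : ℝ, (u x t) ^ 2 - (u x 0) ^ 2 = ∫ s in (0:ℝ)..t, 2 * u x s * ut x s := by
    intro x
    have hcn : ContinuousOn (fun s => (u x s) ^ 2) (Set.Icc 0 t) :=
      ((fw_cont_t hcont x).mono hIccsub).pow 2
    have hdv : ∀ s ∈ Set.Ioo (0:ℝ) t, HasDerivWithinAt (fun s' => (u x s') ^ 2)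
        (2 * u x s * ut x s) (Set.Ioi s) s := by
      intro s hsm
      have hsI : s ∈ Set.Ico (0:ℝ) T := ⟨hsm.1.le, lt_trans hsm.2 ht.2⟩
      have hnbd : Set.Ico (0:ℝ) T ∈ nhds s := Ico_mem_nhds hsm.1 (lt_trans hsm.2 ht.2)
      have hd := (hdt x s hsI).hasDerivAt hnbd
      have h2 : HasDerivAt (fun s' => (u x s') ^ 2) (2 * u x s * ut x s) s := by
        have := hd.fun_pow 2
        exact this.congr_deriv (by push_cast; ring)
      exact h2.hasDerivWithinAt
    have hint : IntervalIntegrable (fun s => 2 * u x s * ut x s) volume 0 t := by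
      apply ContinuousOn.intervalIntegrable
      rw [Set.uIcc_of_le ht0]
      exact (continuous_const.continuousOn.mul ((fw_cont_t hcont x).mono hIccsub)).mul
        ((fw_cont_t hcut x).mono hIccsub)
    have h := intervalIntegral.integral_eq_sub_of_hasDeriv_right_of_le ht0 hcn hdv hint
    linarith
  -- integrate over x, swap, and use the key identity
  have hswap : (∫ x in (0:ℝ)..1, ∫ s in (0:ℝ)..t, 2 * u x s * ut x s)
      = ∫ s in (0:ℝ)..t, ∫ x in (0:ℝ)..1, 2 * u x s * ut x s := by
    apply fw_fubini_box zero_le_one ht0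
    have hsub : Set.Icc (0:ℝ) 1 ×ˢ Set.Icc (0:ℝ) t ⊆ Set.univ ×ˢ Set.Ico 0 T :=
      Set.prod_mono (Set.subset_univ _) hIccsub
    exact (continuous_const.continuousOn.mul (hcont.mono hsub)).mul (hcut.mono hsub)
  have hEeq : (∫ x in (0:ℝ)..1, (u x t) ^ 2) = ∫ x in (0:ℝ)..1, (u x 0) ^ 2 := by
    have hL : (∫ x in (0:ℝ)..1, ((u x t) ^ 2 - (u x 0) ^ 2)) = 0 := by
      calc (∫ x in (0:ℝ)..1, ((u x t) ^ 2 - (u x 0) ^ 2))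
          = ∫ x in (0:ℝ)..1, ∫ s in (0:ℝ)..t, 2 * u x s * ut x s :=
            intervalIntegral.integral_congr fun x _ => hftc x
        _ = ∫ s in (0:ℝ)..t, ∫ x in (0:ℝ)..1, 2 * u x s * ut x s := hswap
        _ = ∫ s in (0:ℝ)..t, (0:ℝ) := by
            apply intervalIntegral.integral_congr
            intro s hsm
            rw [Set.uIcc_of_le ht0] at hsm
            have hsI : s ∈ Set.Ico (0:ℝ) T := hIccsub hsm
            have h4 : (∫ x in (0:ℝ)..1, 2 * u x s * ut x s)
                = 2 * ∫ x in (0:ℝ)..1, u x s * ut x s := by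
              rw [← intervalIntegral.integral_const_mul]
              apply intervalIntegral.integral_congr
              intro x _
              ring
            show (∫ x in (0:ℝ)..1, 2 * u x s * ut x s) = 0
            rw [h4, key s hsI, mul_zero]
        _ = 0 := by simp
    have hi1 : IntervalIntegrable (fun x => (u x t) ^ 2) volume 0 1 :=
      ((fw_cont_x hcont ht).pow 2).intervalIntegrable 0 1
    have hi0 : IntervalIntegrable (fun x => (u x 0) ^ 2) volume 0 1 :=
      ((fw_cont_x hcont h0T).pow 2).intervalIntegrable 0 1
    rw [intervalIntegral.integral_sub hi1 hi0] at hL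
    linarith
  have hE0 : 0 ≤ ∫ x in (0:ℝ)..1, (u x 0) ^ 2 :=
    intervalIntegral.integral_nonneg zero_le_one fun x _ => sq_nonneg _
  have hexp : 1 ≤ Real.exp (2 * t) := Real.one_le_exp (by linarith)
  calc (∫ x in (0:ℝ)..1, (u x t) ^ 2) = ∫ x in (0:ℝ)..1, (u x 0) ^ 2 := hEeq
    _ = 1 * ∫ x in (0:ℝ)..1, (u x 0) ^ 2 := (one_mul _).symm
    _ ≤ Real.exp (2 * t) * ∫ x in (0:ℝ)..1, (u x 0) ^ 2 :=
        mul_le_mul_of_nonneg_right hexp hE0
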